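/- Classification for the Calculus of Constructions: if \Gamma \vdash A : B in CC, then exactly one of the following holds: B = \Box; or \Gamma \vdash B : \Box; or \Gamma \vdash B : \ast. -/

import Mathlib

/-- Expressions of a pure type system: sorts, de Bruijn variables,
dependent products, annotated abstractions, applications. -/
inductive Expr : Type
  | sort : Nat → Expr
  | var : Nat → Expr
  | pi : Expr → Expr → Expr
  | lam : Expr → Expr → Expr
  | app : Expr → Expr → Expr
  deriving DecidableEq

/-- Lift free de Bruijn variables `≥ k` by `d`. -/
def Expr.lift (d k : Nat) : Expr → Expr
  | .sort s => .sort s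
  | .var n => if n < k then .var n else .var (n + d)
  | .pi A B => .pi (Expr.lift d k A) (Expr.lift d (k+1) B)
  | .lam A b => .lam (Expr.lift d k A) (Expr.lift d (k+1) b)
  | .app a b => .app (Expr.lift d k a) (Expr.lift d k b)

/-- Capture-avoiding substitution of `e` for variable `k`. -/
def Expr.subst (e : Expr) (k : Nat) : Expr → Expr
  | .sort s => .sort s
  | .var n => if n < k then .var n else if n = k then Expr.lift k 0 e else .var (n - 1)
  | .pi A B => .pi (Expr.subst e k A) (Expr.subst e (k+1) B)
  | .lam A b => .lam (Expr.subst e k A) (Expr.subst e (k+1) b)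
  | .app a b => .app (Expr.subst e k a) (Expr.subst e k b)

/-- One-step beta reduction, with full congruence rules. -/
inductive Step : Expr → Expr → Prop
  | beta (A b a : Expr) : Step (.app (.lam A b) a) (Expr.subst a 0 b)
  | pi1 {A A' B} : Step A A' → Step (.pi A B) (.pi A' B)
  | pi2 {A B B'} : Step B B' → Step (.pi A B) (.pi A B')
  | lam1 {A A' b} : Step A A' → Step (.lam A b) (.lam A' b)
  | lam2 {A b b'} : Step b b' → Step (.lam A b) (.lam A b')
  | app1 {a a' b} : Step a a' → Step (.app a b) (.app a' b)
  | app2 {a b b'} : Step b b' → Step (.app a b) (.app a b')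

/-- Multi-step reduction. -/
def Steps : Expr → Expr → Prop := Relation.ReflTransGen Step

/-- Strong normalization: no infinite reduction sequences from `a`. -/
def SN (a : Expr) : Prop := Acc (fun x y => Step y x) a

/-- Base expressions: a variable applied to a list of arguments. -/
inductive Base : Expr → Prop
  | var (n : Nat) : Base (.var n)
  | app {a} (b : Expr) : Base a → Base (.app a b)

/-- Key-redex contraction: `KeyRed a b` means `a` has a key redex and
contracting it yields `b` (i.e. `b = red_k a`). -/
inductive KeyRed : Expr → Expr → Prop
  | beta (A b a : Expr) : KeyRed (.app (.lam A b) a) (Expr.subst a 0 b)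
  | app {a a'} (b : Expr) : KeyRed a a' → KeyRed (.app a b) (.app a' b)

/-- `a` has a key redex. -/
def HasKey (a : Expr) : Prop := ∃ b, KeyRed a b

/-- Saturated sets of expressions. -/
def Saturated (S : Set Expr) : Prop :=
  (∀ a ∈ S, SN a) ∧
  (∀ a, Base a → SN a → a ∈ S) ∧
  (∀ a b, SN a → KeyRed a b → b ∈ S → a ∈ S)

/-- Function space on sets of expressions. -/
def Arrow (S₁ S₂ : Set Expr) : Set Expr := {a | ∀ b ∈ S₁, Expr.app a b ∈ S₂}

/-- Beta-conversion: the equivalence closure of one-step reduction. -/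
def Conv : Expr → Expr → Prop := Relation.EqvGen Step

/-- Specification of a pure type system: sorts, axioms and rules. -/
structure PTSSpec where
  sorts : Set Nat
  ax : Set (Nat × Nat)
  rules : Set (Nat × Nat × Nat)

/-- Typing contexts: de Bruijn lists, the head is the most recent binding. -/
abbrev Ctx := List Expr

mutual
/-- PTS typing judgement `Γ ⊢ a : A`. -/
inductive Typing (P : PTSSpec) : Ctx → Expr → Expr → Prop
  | sort {Γ s₁ s₂} : Wf P Γ → (s₁, s₂) ∈ P.ax →
      Typing P Γ (.sort s₁) (.sort s₂)
  | var {Γ n A} : Wf P Γ → Γ[n]? = some A →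
      Typing P Γ (.var n) (Expr.lift (n+1) 0 A)
  | pi {Γ A B s₁ s₂ s₃} : Typing P Γ A (.sort s₁) →
      Typing P (A :: Γ) B (.sort s₂) → (s₁, s₂, s₃) ∈ P.rules →
      Typing P Γ (.pi A B) (.sort s₃)
  | lam {Γ A B b s} : Typing P Γ (.pi A B) (.sort s) →
      Typing P (A :: Γ) b B →
      Typing P Γ (.lam A b) (.pi A B)
  | app {Γ a b A B} : Typing P Γ a (.pi A B) → Typing P Γ b A →
      Typing P Γ (.app a b) (Expr.subst b 0 B)
  | conv {Γ a A B s} : Typing P Γ a A → Typing P Γ B (.sort s) →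
      Conv A B → Typing P Γ a B

/-- Well-formed contexts. -/
inductive Wf (P : PTSSpec) : Ctx → Prop
  | nil : Wf P []
  | cons {Γ A s} : Typing P Γ A (.sort s) → Wf P (A :: Γ)
end

/-- The Calculus of Constructions: `∗` is sort 0, `□` is sort 1. -/
def CC : PTSSpec :=
  { sorts := {0, 1}
    ax := {(0, 1)}
    rules := {(0, 0, 0), (1, 0, 0), (1, 1, 1), (0, 1, 1)} }

namespace Expr

theorem lift_var_lt {n k d : Nat} (h : n < k) : lift d k (.var n) = .var n := by
  simp [lift, h]
theorem lift_var_ge {n k d : Nat} (h : k ≤ n) : lift d k (.var n) = .var (n + d) := by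
  simp [lift, Nat.not_lt.mpr h]
theorem subst_var_lt {n k : Nat} {e : Expr} (h : n < k) : subst e k (.var n) = .var n := by
  simp [subst, h]
theorem subst_var_eq {k : Nat} {e : Expr} : subst e k (.var k) = lift k 0 e := by
  simp [subst]
theorem subst_var_gt {n k : Nat} {e : Expr} (h : k < n) : subst e k (.var n) = .var (n - 1) := by
  simp [subst, Nat.not_lt.mpr (Nat.le_of_lt h), Nat.ne_of_gt h]

theorem lift_lift_perm (t : Expr) : ∀ i k d d', i ≤ k →
    lift d i (lift d' k t) = lift d' (k + d) (lift d i t) := by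
  induction t with
  | sort s => intros; simp [lift]
  | var n =>
    intro i k d d' h
    rcases Nat.lt_or_ge n i with h1 | h1
    · rw [lift_var_lt (show n < k by omega), lift_var_lt h1, lift_var_lt (show n < k + d by omega)]
    · rcases Nat.lt_or_ge n k with h2 | h2
      · rw [lift_var_lt h2, lift_var_ge h1, lift_var_lt (show n + d < k + d by omega)]
      · rw [lift_var_ge h2, lift_var_ge (show i ≤ n + d' by omega), lift_var_ge h1,
          lift_var_ge (show k + d ≤ n + d by omega)]
        exact congrArg Expr.var (by omega)
  | pi A B ihA ihB =>
    intro i k d d' h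
    simp only [lift, ihA i k d d' h]
    have := ihB (i+1) (k+1) d d' (by omega)
    rw [show k + 1 + d = k + d + 1 by omega] at this
    rw [this]
  | lam A b ihA ihb =>
    intro i k d d' h
    simp only [lift, ihA i k d d' h]
    have := ihb (i+1) (k+1) d d' (by omega)
    rw [show k + 1 + d = k + d + 1 by omega] at this
    rw [this]
  | app a b iha ihb =>
    intro i k d d' h
    simp only [lift, iha i k d d' h, ihb i k d d' h]

theorem lift_lift_add (t : Expr) : ∀ k k' d d', k ≤ k' → k' ≤ k + d →
    lift d' k' (lift d k t) = lift (d + d') k t := by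
  induction t with
  | sort s => intros; simp [lift]
  | var n =>
    intro k k' d d' h1 h2
    rcases Nat.lt_or_ge n k with h3 | h3
    · rw [lift_var_lt h3, lift_var_lt (show n < k' by omega), lift_var_lt h3]
    · rw [lift_var_ge h3, lift_var_ge (show k' ≤ n + d by omega), lift_var_ge h3]
      exact congrArg Expr.var (by omega)
  | pi A B ihA ihB =>
    intro k k' d d' h1 h2
    simp only [lift, ihA k k' d d' h1 h2, ihB (k+1) (k'+1) d d' (by omega) (by omega)]
  | lam A b ihA ihb =>
    intro k k' d d' h1 h2
    simp only [lift, ihA k k' d d' h1 h2, ihb (k+1) (k'+1) d d' (by omega) (by omega)]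
  | app a b iha ihb =>
    intro k k' d d' h1 h2
    simp only [lift, iha k k' d d' h1 h2, ihb k k' d d' h1 h2]

theorem lift_subst (t : Expr) : ∀ a j k d,
    lift d (j + k) (subst a j t) = subst (lift d k a) j (lift d (j + k + 1) t) := by
  induction t with
  | sort s => intros; simp [lift, subst]
  | var n =>
    intro a j k d
    rcases lt_trichotomy n j with h | h | h
    · rw [subst_var_lt h, lift_var_lt (show n < j + k by omega),
        lift_var_lt (show n < j + k + 1 by omega), subst_var_lt h]
    · subst h
      rw [subst_var_eq, lift_var_lt (show n < n + k + 1 by omega), subst_var_eq,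
        Nat.add_comm n k]
      exact (lift_lift_perm a 0 k n d (Nat.zero_le _)).symm
    · rw [subst_var_gt h]
      rcases Nat.lt_or_ge n (j + k + 1) with h2 | h2
      · rw [lift_var_lt (show n - 1 < j + k by omega), lift_var_lt h2, subst_var_gt h]
      · rw [lift_var_ge (show j + k ≤ n - 1 by omega), lift_var_ge h2,
          subst_var_gt (show j < n + d by omega)]
        exact congrArg Expr.var (by omega)
  | pi A B ihA ihB =>
    intro a j k d
    simp only [lift, subst, ihA a j k d]
    have := ihB a (j+1) k d
    rw [show j + 1 + k = j + k + 1 by omega] at this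
    rw [this]
  | lam A b ihA ihb =>
    intro a j k d
    simp only [lift, subst, ihA a j k d]
    have := ihb a (j+1) k d
    rw [show j + 1 + k = j + k + 1 by omega] at this
    rw [this]
  | app f b ihf ihb =>
    intro a j k d
    simp only [lift, subst, ihf a j k d, ihb a j k d]

theorem subst_lift (t : Expr) : ∀ e i k d, i ≤ k →
    subst e (k + d) (lift d i t) = lift d i (subst e k t) := by
  induction t with
  | sort s => intros; simp [lift, subst]
  | var n =>
    intro e i k d h
    rcases Nat.lt_or_ge n i with h1 | h1
    · rw [lift_var_lt h1, subst_var_lt (show n < k + d by omega), subst_var_lt (show n < k by omega),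
        lift_var_lt h1]
    · rw [lift_var_ge h1]
      rcases lt_trichotomy n k with h2 | h2 | h2
      · rw [subst_var_lt (show n + d < k + d by omega), subst_var_lt h2, lift_var_ge h1]
      · subst h2
        rw [subst_var_eq, subst_var_eq]
        exact (lift_lift_add e 0 i n d (Nat.zero_le _) (by omega)).symm
      · rw [subst_var_gt (show k + d < n + d by omega), subst_var_gt h2,
          lift_var_ge (show i ≤ n - 1 by omega)]
        exact congrArg Expr.var (by omega)
  | pi A B ihA ihB =>
    intro e i k d h
    simp only [lift, subst, ihA e i k d h]
    have := ihB e (i+1) (k+1) d (by omega)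
    rw [show k + 1 + d = k + d + 1 by omega] at this
    rw [this]
  | lam A b ihA ihb =>
    intro e i k d h
    simp only [lift, subst, ihA e i k d h]
    have := ihb e (i+1) (k+1) d (by omega)
    rw [show k + 1 + d = k + d + 1 by omega] at this
    rw [this]
  | app a b iha ihb =>
    intro e i k d h
    simp only [lift, subst, iha e i k d h, ihb e i k d h]

theorem subst_lift_cancel (t : Expr) : ∀ u i j d, i ≤ j → j ≤ i + d →
    subst u j (lift (d+1) i t) = lift d i t := by
  induction t with
  | sort s => intros; simp [lift, subst]
  | var n =>
    intro u i j d h1 h2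
    rcases Nat.lt_or_ge n i with h3 | h3
    · rw [lift_var_lt h3, subst_var_lt (show n < j by omega), lift_var_lt h3]
    · rw [lift_var_ge h3, subst_var_gt (show j < n + (d+1) by omega), lift_var_ge h3]
      exact congrArg Expr.var (by omega)
  | pi A B ihA ihB =>
    intro u i j d h1 h2
    simp only [lift, subst, ihA u i j d h1 h2, ihB u (i+1) (j+1) d (by omega) (by omega)]
  | lam A b ihA ihb =>
    intro u i j d h1 h2
    simp only [lift, subst, ihA u i j d h1 h2, ihb u (i+1) (j+1) d (by omega) (by omega)]
  | app a b iha ihb =>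
    intro u i j d h1 h2
    simp only [lift, subst, iha u i j d h1 h2, ihb u i j d h1 h2]

theorem subst_subst (t : Expr) : ∀ u v j k,
    subst v (j + k) (subst u j t) = subst (subst v k u) j (subst v (j + k + 1) t) := by
  induction t with
  | sort s => intros; simp [subst]
  | var n =>
    intro u v j k
    rcases lt_trichotomy n j with h | h | h
    · rw [subst_var_lt h, subst_var_lt (show n < j + k by omega),
        subst_var_lt (show n < j + k + 1 by omega), subst_var_lt h]
    · subst h
      rw [subst_var_eq, subst_var_lt (show n < n + k + 1 by omega), subst_var_eq]
      have := subst_lift u v 0 k n (Nat.zero_le _)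
      rw [show n + k = k + n by omega]
      exact this
    · rw [subst_var_gt h]
      rcases lt_trichotomy n (j + k + 1) with h2 | h2 | h2
      · rw [subst_var_lt (show n - 1 < j + k by omega), subst_var_lt h2, subst_var_gt h]
      · subst h2
        rw [show j + k + 1 - 1 = j + k from rfl, subst_var_eq, subst_var_eq]
        exact (subst_lift_cancel v (subst v k u) 0 j (j+k) (Nat.zero_le _) (by omega)).symm
      · rw [subst_var_gt (show j + k < n - 1 by omega), subst_var_gt h2,
          subst_var_gt (show j < n - 1 by omega)]
  | pi A B ihA ihB =>
    intro u v j k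
    simp only [subst, ihA u v j k]
    have := ihB u v (j+1) k
    rw [show j + 1 + k = j + k + 1 by omega] at this
    rw [this]
  | lam A b ihA ihb =>
    intro u v j k
    simp only [subst, ihA u v j k]
    have := ihb u v (j+1) k
    rw [show j + 1 + k = j + k + 1 by omega] at this
    rw [this]
  | app a b iha ihb =>
    intro u v j k
    simp only [subst, iha u v j k, ihb u v j k]

end Expr
/-! ### Reduction and conversion -/

theorem Step.lift {t t' : Expr} (h : Step t t') : ∀ d k, Step (t.lift d k) (t'.lift d k) := by
  induction h with
  | beta A b a =>
    intro d k
    have : Expr.lift d k (Expr.subst a 0 b) = Expr.subst (a.lift d k) 0 (b.lift d (k+1)) := by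
      have := Expr.lift_subst b a 0 k d
      simpa using this
    rw [this]
    exact Step.beta _ _ _
  | pi1 _ ih => intro d k; exact Step.pi1 (ih d k)
  | pi2 _ ih => intro d k; exact Step.pi2 (ih d (k+1))
  | lam1 _ ih => intro d k; exact Step.lam1 (ih d k)
  | lam2 _ ih => intro d k; exact Step.lam2 (ih d (k+1))
  | app1 _ ih => intro d k; exact Step.app1 (ih d k)
  | app2 _ ih => intro d k; exact Step.app2 (ih d k)

theorem Step.subst {t t' : Expr} (h : Step t t') : ∀ (e : Expr) k,
    Step (Expr.subst e k t) (Expr.subst e k t') := by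
  induction h with
  | beta A b a =>
    intro e k
    have : Expr.subst e k (Expr.subst a 0 b)
        = Expr.subst (Expr.subst e k a) 0 (Expr.subst e (k+1) b) := by
      have := Expr.subst_subst b a e 0 k
      simpa using this
    rw [this]
    exact Step.beta _ _ _
  | pi1 _ ih => intro e k; exact Step.pi1 (ih e k)
  | pi2 _ ih => intro e k; exact Step.pi2 (ih e (k+1))
  | lam1 _ ih => intro e k; exact Step.lam1 (ih e k)
  | lam2 _ ih => intro e k; exact Step.lam2 (ih e (k+1))
  | app1 _ ih => intro e k; exact Step.app1 (ih e k)
  | app2 _ ih => intro e k; exact Step.app2 (ih e k)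

namespace Conv

theorem refl (a : Expr) : Conv a a := Relation.EqvGen.refl a
theorem symm {a b : Expr} (h : Conv a b) : Conv b a := Relation.EqvGen.symm _ _ h
theorem trans {a b c : Expr} (h1 : Conv a b) (h2 : Conv b c) : Conv a c :=
  Relation.EqvGen.trans _ _ _ h1 h2
theorem of_step {a b : Expr} (h : Step a b) : Conv a b := Relation.EqvGen.rel _ _ h

theorem mono {f : Expr → Expr} (hf : ∀ {x y}, Step x y → Step (f x) (f y))
    {a b : Expr} (h : Conv a b) : Conv (f a) (f b) := by
  induction h with
  | rel _ _ h => exact of_step (hf h)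
  | refl => exact refl _
  | symm _ _ _ ih => exact ih.symm
  | trans _ _ _ _ _ ih1 ih2 => exact ih1.trans ih2

theorem pi1 {A A' B : Expr} (h : Conv A A') : Conv (.pi A B) (.pi A' B) :=
  mono (fun hs => Step.pi1 hs) h
theorem pi2 {A B B' : Expr} (h : Conv B B') : Conv (.pi A B) (.pi A B') :=
  mono (fun hs => Step.pi2 hs) h
theorem pi_congr {A A' B B' : Expr} (h1 : Conv A A') (h2 : Conv B B') :
    Conv (.pi A B) (.pi A' B') := (pi1 h1).trans (pi2 h2)
theorem subst_right {B B' : Expr} (h : Conv B B') (e : Expr) (k : Nat) :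
    Conv (Expr.subst e k B) (Expr.subst e k B') :=
  mono (fun hs => Step.subst hs e k) h
theorem lift_conv {B B' : Expr} (h : Conv B B') (d k : Nat) :
    Conv (B.lift d k) (B'.lift d k) :=
  mono (fun hs => Step.lift hs d k) h

end Conv

theorem steps_of_conv_base {a b : Expr} (h : Steps a b) : Conv a b := by
  induction h with
  | refl => exact Conv.refl _
  | tail _ h ih => exact ih.trans (Conv.of_step h)

/-! ### Parallel reduction -/

inductive Par : Expr → Expr → Prop
  | sort (s : Nat) : Par (.sort s) (.sort s)
  | var (n : Nat) : Par (.var n) (.var n)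
  | pi {A A' B B'} : Par A A' → Par B B' → Par (.pi A B) (.pi A' B')
  | lam {A A' b b'} : Par A A' → Par b b' → Par (.lam A b) (.lam A' b')
  | app {a a' b b'} : Par a a' → Par b b' → Par (.app a b) (.app a' b')
  | beta {A b b' a a'} : Par b b' → Par a a' →
      Par (.app (.lam A b) a) (Expr.subst a' 0 b')

theorem Par.refl (a : Expr) : Par a a := by
  induction a with
  | sort s => exact Par.sort s
  | var n => exact Par.var n
  | pi A B ihA ihB => exact Par.pi ihA ihB
  | lam A b ihA ihb => exact Par.lam ihA ihb
  | app a b iha ihb => exact Par.app iha ihb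

theorem Par.of_step {a b : Expr} (h : Step a b) : Par a b := by
  induction h with
  | beta A b a => exact Par.beta (Par.refl b) (Par.refl a)
  | pi1 _ ih => exact Par.pi ih (Par.refl _)
  | pi2 _ ih => exact Par.pi (Par.refl _) ih
  | lam1 _ ih => exact Par.lam ih (Par.refl _)
  | lam2 _ ih => exact Par.lam (Par.refl _) ih
  | app1 _ ih => exact Par.app ih (Par.refl _)
  | app2 _ ih => exact Par.app (Par.refl _) ih

namespace StepsLemmas

theorem steps_pi {A A' B B' : Expr} (h1 : Steps A A') (h2 : Steps B B') :
    Steps (.pi A B) (.pi A' B') :=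
  Relation.ReflTransGen.trans
    (Relation.ReflTransGen.lift (f := fun X => Expr.pi X B) (fun _ _ h => Step.pi1 h)  _ _ h1)
    (Relation.ReflTransGen.lift (f := fun X => Expr.pi A' X) (fun _ _ h => Step.pi2 h)  _ _ h2)

theorem steps_lam {A A' b b' : Expr} (h1 : Steps A A') (h2 : Steps b b') :
    Steps (.lam A b) (.lam A' b') :=
  Relation.ReflTransGen.trans
    (Relation.ReflTransGen.lift (f := fun X => Expr.lam X b) (fun _ _ h => Step.lam1 h)  _ _ h1)
    (Relation.ReflTransGen.lift (f := fun X => Expr.lam A' X) (fun _ _ h => Step.lam2 h)  _ _ h2)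

theorem steps_app {a a' b b' : Expr} (h1 : Steps a a') (h2 : Steps b b') :
    Steps (.app a b) (.app a' b') :=
  Relation.ReflTransGen.trans
    (Relation.ReflTransGen.lift (f := fun X => Expr.app X b) (fun _ _ h => Step.app1 h)  _ _ h1)
    (Relation.ReflTransGen.lift (f := fun X => Expr.app a' X) (fun _ _ h => Step.app2 h)  _ _ h2)

end StepsLemmas

open StepsLemmas

theorem Par.to_steps {a b : Expr} (h : Par a b) : Steps a b := by
  induction h with
  | sort s => exact Relation.ReflTransGen.refl
  | var n => exact Relation.ReflTransGen.refl
  | pi _ _ ih1 ih2 => exact steps_pi ih1 ih2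
  | lam _ _ ih1 ih2 => exact steps_lam ih1 ih2
  | app _ _ ih1 ih2 => exact steps_app ih1 ih2
  | beta _ _ ih1 ih2 =>
    exact Relation.ReflTransGen.tail
      (steps_app (steps_lam Relation.ReflTransGen.refl ih1) ih2) (Step.beta _ _ _)

theorem Par.lift {t t' : Expr} (h : Par t t') : ∀ d k, Par (t.lift d k) (t'.lift d k) := by
  induction h with
  | sort s => intro d k; exact Par.refl _
  | var n => intro d k; exact Par.refl _
  | pi _ _ ih1 ih2 => intro d k; exact Par.pi (ih1 d k) (ih2 d (k+1))
  | lam _ _ ih1 ih2 => intro d k; exact Par.lam (ih1 d k) (ih2 d (k+1))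
  | app _ _ ih1 ih2 => intro d k; exact Par.app (ih1 d k) (ih2 d k)
  | @beta A b b' a a' _ _ ih1 ih2 =>
    intro d k
    have heq : Expr.lift d k (Expr.subst a' 0 b')
        = Expr.subst (Expr.lift d k a') 0 (Expr.lift d (k+1) b') := by
      have := Expr.lift_subst b' a' 0 k d
      simpa using this
    simp only [Expr.lift]
    rw [heq]
    exact Par.beta (ih1 d (k+1)) (ih2 d k)

theorem Par.subst_par {t t' : Expr} (h : Par t t') : ∀ {e e' : Expr} (k : Nat), Par e e' →
    Par (Expr.subst e k t) (Expr.subst e' k t') := by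
  induction h with
  | sort s => intro e e' k he; exact Par.refl _
  | var n =>
    intro e e' k he
    rcases lt_trichotomy n k with h | h | h
    · rw [Expr.subst_var_lt h, Expr.subst_var_lt h]; exact Par.refl _
    · subst h
      rw [Expr.subst_var_eq, Expr.subst_var_eq]
      exact he.lift n 0
    · rw [Expr.subst_var_gt h, Expr.subst_var_gt h]; exact Par.refl _
  | pi _ _ ih1 ih2 => intro e e' k he; exact Par.pi (ih1 k he) (ih2 (k+1) he)
  | lam _ _ ih1 ih2 => intro e e' k he; exact Par.lam (ih1 k he) (ih2 (k+1) he)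
  | app _ _ ih1 ih2 => intro e e' k he; exact Par.app (ih1 k he) (ih2 k he)
  | @beta A b b' a a' _ _ ih1 ih2 =>
    intro e e' k he
    have heq : Expr.subst e' k (Expr.subst a' 0 b')
        = Expr.subst (Expr.subst e' k a') 0 (Expr.subst e' (k+1) b') := by
      have := Expr.subst_subst b' a' e' 0 k
      simpa using this
    simp only [Expr.subst]
    rw [heq]
    exact Par.beta (ih1 (k+1) he) (ih2 k he)

theorem Par.lam_inv {A b u : Expr} (h : Par (.lam A b) u) :
    ∃ A' b', u = .lam A' b' ∧ Par A A' ∧ Par b b' := by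
  cases h with
  | lam h1 h2 => exact ⟨_, _, rfl, h1, h2⟩

/-- Complete development. -/
def cd : Expr → Expr
  | .sort s => .sort s
  | .var n => .var n
  | .pi A B => .pi (cd A) (cd B)
  | .lam A b => .lam (cd A) (cd b)
  | .app (.lam _ b) a => Expr.subst (cd a) 0 (cd b)
  | .app a b => .app (cd a) (cd b)

theorem Par.to_cd {t u : Expr} (h : Par t u) : Par u (cd t) := by
  induction h with
  | sort s => exact Par.refl _
  | var n => exact Par.refl _
  | pi _ _ ih1 ih2 => exact Par.pi ih1 ih2
  | lam _ _ ih1 ih2 => exact Par.lam ih1 ih2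
  | @app a a' b b' h1 h2 ih1 ih2 =>
    cases a with
    | lam A c =>
      obtain ⟨A2, c2, rfl, hA2, hc2⟩ := Par.lam_inv h1
      simp only [cd] at ih1 ⊢
      cases ih1 with
      | lam hA hc => exact Par.beta hc ih2
    | sort s => simp only [cd]; exact Par.app ih1 ih2
    | var n => simp only [cd]; exact Par.app ih1 ih2
    | pi X Y => simp only [cd]; exact Par.app ih1 ih2
    | app x y => simp only [cd]; exact Par.app ih1 ih2
  | beta _ _ ih1 ih2 =>
    simp only [cd]
    exact Par.subst_par ih1 0 ih2

theorem Par.diamond {t u v : Expr} (h1 : Par t u) (h2 : Par t v) :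
    ∃ w, Par u w ∧ Par v w :=
  ⟨cd t, h1.to_cd, h2.to_cd⟩

/-- Church–Rosser for conversion. -/
theorem conv_common_reduct {a b : Expr} (h : Conv a b) : ∃ c, Steps a c ∧ Steps b c := by
  have hcr : ∀ x y z, Par x y → Par x z →
      ∃ w, Relation.ReflGen Par y w ∧ Relation.ReflTransGen Par z w := by
    intro x y z hxy hxz
    obtain ⟨w, h1, h2⟩ := Par.diamond hxy hxz
    exact ⟨w, Relation.ReflGen.single h1, Relation.ReflTransGen.single h2⟩
  have hconv : Relation.EqvGen Par a b := by
    induction h with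
    | rel _ _ h => exact Relation.EqvGen.rel _ _ (Par.of_step h)
    | refl => exact Relation.EqvGen.refl _
    | symm _ _ _ ih => exact Relation.EqvGen.symm _ _ ih
    | trans _ _ _ _ _ ih1 ih2 => exact Relation.EqvGen.trans _ _ _ ih1 ih2
  have hequiv := Relation.equivalence_join_reflTransGen hcr
  clear h
  have hjoin : Relation.Join (Relation.ReflTransGen Par) a b := by
    induction hconv with
    | rel _ _ h => exact ⟨_, Relation.ReflTransGen.single h, Relation.ReflTransGen.refl⟩
    | refl x => exact hequiv.refl x
    | symm _ _ _ ih => exact hequiv.symm ih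
    | trans _ _ _ _ _ ih1 ih2 => exact hequiv.trans ih1 ih2
  obtain ⟨c, hac, hbc⟩ := hjoin
  refine ⟨c, ?_, ?_⟩
  · exact Relation.ReflTransGen.trans_induction_on hac
      (fun _ => Relation.ReflTransGen.refl)
      (fun h => (Par.to_steps h))
      (fun _ _ ih1 ih2 => ih1.trans ih2)
  · exact Relation.ReflTransGen.trans_induction_on hbc
      (fun _ => Relation.ReflTransGen.refl)
      (fun h => (Par.to_steps h))
      (fun _ _ ih1 ih2 => ih1.trans ih2)

theorem steps_sort {s : Nat} {c : Expr} (h : Steps (.sort s) c) : c = .sort s := by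
  induction h with
  | refl => rfl
  | tail _ hstep ih => subst ih; cases hstep

theorem conv_sort_sort {s s' : Nat} (h : Conv (.sort s) (.sort s')) : s = s' := by
  obtain ⟨c, h1, h2⟩ := conv_common_reduct h
  rw [steps_sort h1] at h2
  have := steps_sort h2
  cases this; rfl

theorem steps_pi_inv {A B c : Expr} (h : Steps (.pi A B) c) :
    ∃ A' B', c = .pi A' B' ∧ Steps A A' ∧ Steps B B' := by
  induction h with
  | refl => exact ⟨A, B, rfl, Relation.ReflTransGen.refl, Relation.ReflTransGen.refl⟩
  | tail _ hstep ih =>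
    obtain ⟨A', B', rfl, hA, hB⟩ := ih
    cases hstep with
    | pi1 h => exact ⟨_, _, rfl, hA.tail h, hB⟩
    | pi2 h => exact ⟨_, _, rfl, hA, hB.tail h⟩

theorem conv_pi_inv {A B A' B' : Expr} (h : Conv (.pi A B) (.pi A' B')) :
    Conv A A' ∧ Conv B B' := by
  obtain ⟨c, h1, h2⟩ := conv_common_reduct h
  obtain ⟨A1, B1, rfl, hA1, hB1⟩ := steps_pi_inv h1
  obtain ⟨A2, B2, heq, hA2, hB2⟩ := steps_pi_inv h2
  cases heq
  constructor
  · exact (steps_of_conv_base hA1).trans (steps_of_conv_base hA2).symm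
  · exact (steps_of_conv_base hB1).trans (steps_of_conv_base hB2).symm

theorem conv_sort_pi {s : Nat} {A B : Expr} (h : Conv (.sort s) (.pi A B)) : False := by
  obtain ⟨c, h1, h2⟩ := conv_common_reduct h
  rw [steps_sort h1] at h2
  obtain ⟨A', B', heq, -, -⟩ := steps_pi_inv h2
  cases heq
/-! ### Induction principle for typing (trivial motive on `Wf`) -/

theorem Typing.my_ind {P : PTSSpec} {motive : Ctx → Expr → Expr → Prop}
    (sort : ∀ {Γ s₁ s₂}, Wf P Γ → (s₁, s₂) ∈ P.ax → motive Γ (.sort s₁) (.sort s₂))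
    (var : ∀ {Γ n A}, Wf P Γ → Γ[n]? = some A → motive Γ (.var n) (Expr.lift (n+1) 0 A))
    (pi : ∀ {Γ A B s₁ s₂ s₃}, Typing P Γ A (.sort s₁) → Typing P (A :: Γ) B (.sort s₂) →
      (s₁, s₂, s₃) ∈ P.rules → motive Γ A (.sort s₁) → motive (A :: Γ) B (.sort s₂) →
      motive Γ (.pi A B) (.sort s₃))
    (lam : ∀ {Γ A B b s}, Typing P Γ (.pi A B) (.sort s) → Typing P (A :: Γ) b B →
      motive Γ (.pi A B) (.sort s) → motive (A :: Γ) b B → motive Γ (.lam A b) (.pi A B))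
    (app : ∀ {Γ a b A B}, Typing P Γ a (.pi A B) → Typing P Γ b A →
      motive Γ a (.pi A B) → motive Γ b A → motive Γ (.app a b) (Expr.subst b 0 B))
    (conv : ∀ {Γ a A B s}, Typing P Γ a A → Typing P Γ B (.sort s) → Conv A B →
      motive Γ a A → motive Γ B (.sort s) → motive Γ a B)
    : ∀ {Γ a A}, Typing P Γ a A → motive Γ a A := by
  intro Γ a A h
  refine Typing.rec (motive_1 := fun Γ a A _ => motive Γ a A)
    (motive_2 := fun _ _ => True) ?_ ?_ ?_ ?_ ?_ ?_ ?_ ?_ h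
  · intro Γ s₁ s₂ hwf hax _; exact sort hwf hax
  · intro Γ n A hwf hl _; exact var hwf hl
  · intro Γ A B s₁ s₂ s₃ h1 h2 hr ih1 ih2; exact pi h1 h2 hr ih1 ih2
  · intro Γ A B b s h1 h2 ih1 ih2; exact lam h1 h2 ih1 ih2
  · intro Γ a b A B h1 h2 ih1 ih2; exact app h1 h2 ih1 ih2
  · intro Γ a A B s h1 h2 hc ih1 ih2; exact conv h1 h2 hc ih1 ih2
  · trivial
  · intro Γ A s h _; trivial

theorem typing_wf {P : PTSSpec} {Γ a A} (h : Typing P Γ a A) : Wf P Γ := by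
  refine Typing.my_ind (motive := fun Γ _ _ => Wf P Γ) ?_ ?_ ?_ ?_ ?_ ?_ h
  · intro _ _ _ hwf _; exact hwf
  · intro _ _ _ hwf _; exact hwf
  · intro _ _ _ _ _ _ _ _ _ ih _; exact ih
  · intro _ _ _ _ _ _ _ ih _; exact ih
  · intro _ _ _ _ _ _ _ ih _; exact ih
  · intro _ _ _ _ _ _ _ _ ih _; exact ih

/-! ### Generation (inversion) lemmas -/

theorem gen_sort {P : PTSSpec} {Γ s C} (h : Typing P Γ (.sort s) C) :
    ∃ s₂, (s, s₂) ∈ P.ax ∧ Conv C (.sort s₂) := by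
  generalize ht : Expr.sort s = t at h
  refine Typing.my_ind
    (motive := fun Γ t C => Expr.sort s = t → ∃ s₂, (s, s₂) ∈ P.ax ∧ Conv C (.sort s₂))
    ?_ ?_ ?_ ?_ ?_ ?_ h ht
  · rintro _ s₁ s₂ _ hax heq; cases heq; exact ⟨s₂, hax, Conv.refl _⟩
  · rintro _ _ _ _ _ heq; cases heq
  · rintro _ _ _ _ _ _ _ _ _ _ _ heq; cases heq
  · rintro _ _ _ _ _ _ _ _ _ heq; cases heq
  · rintro _ _ _ _ _ _ _ _ _ heq; cases heq
  · rintro _ _ _ B _ _ _ hc ih _ heq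
    obtain ⟨s₂, hax, hconv⟩ := ih heq
    exact ⟨s₂, hax, hc.symm.trans hconv⟩

theorem gen_var {P : PTSSpec} {Γ n C} (h : Typing P Γ (.var n) C) :
    ∃ A, Γ[n]? = some A ∧ Conv C (Expr.lift (n+1) 0 A) := by
  generalize ht : Expr.var n = t at h
  refine Typing.my_ind
    (motive := fun Γ t C => Expr.var n = t → ∃ A, Γ[n]? = some A ∧ Conv C (Expr.lift (n+1) 0 A))
    ?_ ?_ ?_ ?_ ?_ ?_ h ht
  · rintro _ _ _ _ _ heq; cases heq
  · rintro _ m A _ hl heq; cases heq; exact ⟨A, hl, Conv.refl _⟩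
  · rintro _ _ _ _ _ _ _ _ _ _ _ heq; cases heq
  · rintro _ _ _ _ _ _ _ _ _ heq; cases heq
  · rintro _ _ _ _ _ _ _ _ _ heq; cases heq
  · rintro _ _ _ _ _ _ _ hc ih _ heq
    obtain ⟨A, hl, hconv⟩ := ih heq
    exact ⟨A, hl, hc.symm.trans hconv⟩

theorem gen_pi {P : PTSSpec} {Γ A B C} (h : Typing P Γ (.pi A B) C) :
    ∃ s₁ s₂ s₃, Typing P Γ A (.sort s₁) ∧ Typing P (A :: Γ) B (.sort s₂) ∧
      (s₁, s₂, s₃) ∈ P.rules ∧ Conv C (.sort s₃) := by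
  generalize ht : Expr.pi A B = t at h
  refine Typing.my_ind
    (motive := fun Γ t C => Expr.pi A B = t →
      ∃ s₁ s₂ s₃, Typing P Γ A (.sort s₁) ∧ Typing P (A :: Γ) B (.sort s₂) ∧
        (s₁, s₂, s₃) ∈ P.rules ∧ Conv C (.sort s₃))
    ?_ ?_ ?_ ?_ ?_ ?_ h ht
  · rintro _ _ _ _ _ heq; cases heq
  · rintro _ _ _ _ _ heq; cases heq
  · rintro _ A' B' s₁ s₂ s₃ h1 h2 hr _ _ heq; cases heq
    exact ⟨s₁, s₂, s₃, h1, h2, hr, Conv.refl _⟩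
  · rintro _ _ _ _ _ _ _ _ _ heq; cases heq
  · rintro _ _ _ _ _ _ _ _ _ heq; cases heq
  · rintro _ _ _ _ _ _ _ hc ih _ heq
    obtain ⟨s₁, s₂, s₃, h1, h2, hr, hconv⟩ := ih heq
    exact ⟨s₁, s₂, s₃, h1, h2, hr, hc.symm.trans hconv⟩

theorem gen_lam {P : PTSSpec} {Γ A b C} (h : Typing P Γ (.lam A b) C) :
    ∃ B s, Typing P Γ (.pi A B) (.sort s) ∧ Typing P (A :: Γ) b B ∧ Conv C (.pi A B) := by
  generalize ht : Expr.lam A b = t at h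
  refine Typing.my_ind
    (motive := fun Γ t C => Expr.lam A b = t →
      ∃ B s, Typing P Γ (.pi A B) (.sort s) ∧ Typing P (A :: Γ) b B ∧ Conv C (.pi A B))
    ?_ ?_ ?_ ?_ ?_ ?_ h ht
  · rintro _ _ _ _ _ heq; cases heq
  · rintro _ _ _ _ _ heq; cases heq
  · rintro _ _ _ _ _ _ _ _ _ _ _ heq; cases heq
  · rintro _ A' B' b' s h1 h2 _ _ heq; cases heq
    exact ⟨B', s, h1, h2, Conv.refl _⟩
  · rintro _ _ _ _ _ _ _ _ _ heq; cases heq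
  · rintro _ _ _ _ _ _ _ hc ih _ heq
    obtain ⟨B', s, h1, h2, hconv⟩ := ih heq
    exact ⟨B', s, h1, h2, hc.symm.trans hconv⟩

theorem gen_app {P : PTSSpec} {Γ f b C} (h : Typing P Γ (.app f b) C) :
    ∃ A B, Typing P Γ f (.pi A B) ∧ Typing P Γ b A ∧ Conv C (Expr.subst b 0 B) := by
  generalize ht : Expr.app f b = t at h
  refine Typing.my_ind
    (motive := fun Γ t C => Expr.app f b = t →
      ∃ A B, Typing P Γ f (.pi A B) ∧ Typing P Γ b A ∧ Conv C (Expr.subst b 0 B))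
    ?_ ?_ ?_ ?_ ?_ ?_ h ht
  · rintro _ _ _ _ _ heq; cases heq
  · rintro _ _ _ _ _ heq; cases heq
  · rintro _ _ _ _ _ _ _ _ _ _ _ heq; cases heq
  · rintro _ _ _ _ _ _ _ _ _ heq; cases heq
  · rintro _ f' b' A' B' h1 h2 _ _ heq; cases heq
    exact ⟨A', B', h1, h2, Conv.refl _⟩
  · rintro _ _ _ _ _ _ _ hc ih _ heq
    obtain ⟨A', B', h1, h2, hconv⟩ := ih heq
    exact ⟨A', B', h1, h2, hc.symm.trans hconv⟩

/-! ### Weakening -/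

def liftCtx : Ctx → Ctx
  | [] => []
  | t :: Δ => Expr.lift 1 Δ.length t :: liftCtx Δ

theorem liftCtx_length (Δ : Ctx) : (liftCtx Δ).length = Δ.length := by
  induction Δ with
  | nil => rfl
  | cons t Δ ih => simp [liftCtx, ih]

theorem liftCtx_getElem? (Δ : Ctx) (n : Nat) (h : n < Δ.length) :
    (liftCtx Δ)[n]? = (Δ[n]?).map (Expr.lift 1 (Δ.length - n - 1)) := by
  induction Δ generalizing n with
  | nil => simp at h
  | cons t Δ ih =>
    cases n with
    | zero => simp [liftCtx]
    | succ n =>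
      simp only [liftCtx, List.getElem?_cons_succ, List.length_cons]
      rw [ih n (by simpa using h), show Δ.length + 1 - (n+1) - 1 = Δ.length - n - 1 by omega]

theorem weaken_gen {P : PTSSpec} {Γ a A} (h : Typing P Γ a A) :
    ∀ Δ₁ Δ₂ C, Γ = Δ₁ ++ Δ₂ → Wf P (liftCtx Δ₁ ++ C :: Δ₂) →
      Typing P (liftCtx Δ₁ ++ C :: Δ₂) (a.lift 1 Δ₁.length) (A.lift 1 Δ₁.length) := by
  refine Typing.my_ind (motive := fun Γ a A => ∀ Δ₁ Δ₂ C, Γ = Δ₁ ++ Δ₂ →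
    Wf P (liftCtx Δ₁ ++ C :: Δ₂) →
    Typing P (liftCtx Δ₁ ++ C :: Δ₂) (a.lift 1 Δ₁.length) (A.lift 1 Δ₁.length)) ?_ ?_ ?_ ?_ ?_ ?_ h
  · intro Γ s₁ s₂ _ hax Δ₁ Δ₂ C _ hwf
    simpa [Expr.lift] using Typing.sort hwf hax
  · intro Γ n A _ hl Δ₁ Δ₂ C heq hwf
    subst heq
    set m := Δ₁.length with hm
    rcases Nat.lt_or_ge n m with hn | hn
    · rw [Expr.lift_var_lt hn]
      have hl1 : Δ₁[n]? = some A := by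
        rwa [List.getElem?_append_left hn] at hl
      have hl2 : (liftCtx Δ₁ ++ C :: Δ₂)[n]? = some (Expr.lift 1 (m - n - 1) A) := by
        rw [List.getElem?_append_left (by rw [liftCtx_length]; exact hn), liftCtx_getElem? _ _ hn, hl1]
        rfl
      have := Typing.var hwf hl2
      have heq2 : Expr.lift (n+1) 0 (Expr.lift 1 (m - n - 1) A)
          = Expr.lift 1 m (Expr.lift (n+1) 0 A) := by
        have := Expr.lift_lift_perm A 0 (m - n - 1) (n+1) 1 (Nat.zero_le _)
        rwa [show m - n - 1 + (n + 1) = m by omega] at this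
      rwa [heq2] at this
    · rw [Expr.lift_var_ge hn]
      have hl1 : Δ₂[n - m]? = some A := by
        rwa [List.getElem?_append_right hn] at hl
      have hl2 : (liftCtx Δ₁ ++ C :: Δ₂)[n + 1]? = some A := by
        rw [List.getElem?_append_right (by rw [liftCtx_length]; omega)]
        rw [liftCtx_length]
        rw [show n + 1 - m = (n - m) + 1 by omega]
        simpa using hl1
      have := Typing.var hwf hl2
      have heq2 : Expr.lift (n+1+1) 0 A = Expr.lift 1 m (Expr.lift (n+1) 0 A) :=
        (Expr.lift_lift_add A 0 m (n+1) 1 (Nat.zero_le _) (by omega)).symm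
      rwa [heq2] at this
  · intro Γ A B s₁ s₂ s₃ h1 h2 hr ih1 ih2 Δ₁ Δ₂ C heq hwf
    subst heq
    have thA := ih1 Δ₁ Δ₂ C rfl hwf
    simp only [Expr.lift] at thA
    have hwf2 : Wf P ((A.lift 1 Δ₁.length) :: (liftCtx Δ₁ ++ C :: Δ₂)) := Wf.cons thA
    have thB := ih2 (A :: Δ₁) Δ₂ C rfl (by simpa [liftCtx] using hwf2)
    simp only [Expr.lift, List.length_cons] at thB ⊢
    simp only [liftCtx] at thB
    exact Typing.pi thA (by simpa using thB) hr
  · intro Γ A B b s h1 h2 ih1 ih2 Δ₁ Δ₂ C heq hwf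
    subst heq
    have thP := ih1 Δ₁ Δ₂ C rfl hwf
    simp only [Expr.lift] at thP
    obtain ⟨s₁, s₂, s₃, hA', hB', -, -⟩ := gen_pi thP
    have hwf2 : Wf P ((A.lift 1 Δ₁.length) :: (liftCtx Δ₁ ++ C :: Δ₂)) := Wf.cons hA'
    have thb := ih2 (A :: Δ₁) Δ₂ C rfl (by simpa [liftCtx] using hwf2)
    simp only [List.length_cons, liftCtx] at thb
    simp only [Expr.lift]
    exact Typing.lam thP (by simpa using thb)
  · intro Γ f b A B h1 h2 ih1 ih2 Δ₁ Δ₂ C heq hwf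
    subst heq
    have thf := ih1 Δ₁ Δ₂ C rfl hwf
    have thb := ih2 Δ₁ Δ₂ C rfl hwf
    simp only [Expr.lift] at thf
    have := Typing.app thf thb
    have heq2 : Expr.subst (b.lift 1 Δ₁.length) 0 (B.lift 1 (Δ₁.length + 1))
        = Expr.lift 1 Δ₁.length (Expr.subst b 0 B) := by
      have := Expr.lift_subst B b 0 Δ₁.length 1
      simpa using this.symm
    rwa [heq2] at this
  · intro Γ a A B s _ _ hc ih1 ih2 Δ₁ Δ₂ C heq hwf
    subst heq
    have th1 := ih1 Δ₁ Δ₂ C rfl hwf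
    have th2 := ih2 Δ₁ Δ₂ C rfl hwf
    simp only [Expr.lift] at th2
    exact Typing.conv th1 th2 (hc.lift_conv 1 Δ₁.length)

theorem weaken1 {P : PTSSpec} {Γ a A C : _} (h : Typing P Γ a A) (hwf : Wf P (C :: Γ)) :
    Typing P (C :: Γ) (a.lift 1 0) (A.lift 1 0) :=
  weaken_gen h [] Γ C rfl hwf

theorem wf_tail {P : PTSSpec} {C : Expr} {Γ : Ctx} (h : Wf P (C :: Γ)) : Wf P Γ := by
  cases h with
  | cons h => exact typing_wf h

theorem wf_lookup {P : PTSSpec} {Γ : Ctx} (hwf : Wf P Γ) :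
    ∀ {n A}, Γ[n]? = some A → ∃ s, Typing P Γ (Expr.lift (n+1) 0 A) (.sort s) := by
  induction Γ with
  | nil => intro n A h; simp at h
  | cons C Δ ih =>
    intro n A h
    have hwfΔ := wf_tail hwf
    cases n with
    | zero =>
      simp at h
      subst h
      cases hwf with
      | cons hC =>
        rename_i s
        refine ⟨s, ?_⟩
        have := weaken1 hC (Wf.cons hC)
        simpa [Expr.lift] using this
    | succ n =>
      simp only [List.getElem?_cons_succ] at h
      obtain ⟨s, hs⟩ := ih hwfΔ h
      refine ⟨s, ?_⟩
      have := weaken1 hs hwf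
      have heq : Expr.lift 1 0 (Expr.lift (n+1) 0 A) = Expr.lift (n+1+1) 0 A :=
        Expr.lift_lift_add A 0 0 (n+1) 1 (Nat.le_refl _) (by omega)
      rw [heq] at this
      simpa [Expr.lift] using this

/-! ### Substitution -/

theorem Expr.lift_zero (t : Expr) : ∀ k, Expr.lift 0 k t = t := by
  induction t with
  | sort s => intro k; rfl
  | var n => intro k; simp [Expr.lift]
  | pi A B ihA ihB => intro k; simp [Expr.lift, ihA, ihB]
  | lam A b ihA ihb => intro k; simp [Expr.lift, ihA, ihb]
  | app a b iha ihb => intro k; simp [Expr.lift, iha, ihb]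

theorem weaken_many {P : PTSSpec} {Δ₂ : Ctx} {b A₀ : Expr} (h : Typing P Δ₂ b A₀) :
    ∀ Δ : Ctx, Wf P (Δ ++ Δ₂) →
      Typing P (Δ ++ Δ₂) (b.lift Δ.length 0) (A₀.lift Δ.length 0) := by
  intro Δ
  induction Δ with
  | nil => intro _; simpa [Expr.lift_zero] using h
  | cons C Δ ih =>
    intro hwf
    have hwf' : Wf P (Δ ++ Δ₂) := wf_tail hwf
    have := weaken1 (ih hwf') hwf
    have e1 : Expr.lift 1 0 (b.lift Δ.length 0) = b.lift (Δ.length + 1) 0 :=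
      Expr.lift_lift_add b 0 0 Δ.length 1 (Nat.le_refl _) (by omega)
    have e2 : Expr.lift 1 0 (A₀.lift Δ.length 0) = A₀.lift (Δ.length + 1) 0 :=
      Expr.lift_lift_add A₀ 0 0 Δ.length 1 (Nat.le_refl _) (by omega)
    rw [e1, e2] at this
    simpa using this

def substCtx (b : Expr) : Ctx → Ctx
  | [] => []
  | t :: Δ => Expr.subst b Δ.length t :: substCtx b Δ

theorem substCtx_length (b : Expr) (Δ : Ctx) : (substCtx b Δ).length = Δ.length := by
  induction Δ with
  | nil => rfl
  | cons t Δ ih => simp [substCtx, ih]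

theorem substCtx_getElem? (b : Expr) (Δ : Ctx) (n : Nat) (h : n < Δ.length) :
    (substCtx b Δ)[n]? = (Δ[n]?).map (Expr.subst b (Δ.length - n - 1)) := by
  induction Δ generalizing n with
  | nil => simp at h
  | cons t Δ ih =>
    cases n with
    | zero => simp [substCtx]
    | succ n =>
      simp only [substCtx, List.getElem?_cons_succ, List.length_cons]
      rw [ih n (by simpa using h), show Δ.length + 1 - (n+1) - 1 = Δ.length - n - 1 by omega]

theorem subst_gen {P : PTSSpec} {Γ a A} (h : Typing P Γ a A) :
    ∀ Δ₁ Δ₂ A₀ b, Γ = Δ₁ ++ A₀ :: Δ₂ → Typing P Δ₂ b A₀ →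
      Wf P (substCtx b Δ₁ ++ Δ₂) →
      Typing P (substCtx b Δ₁ ++ Δ₂) (Expr.subst b Δ₁.length a) (Expr.subst b Δ₁.length A) := by
  refine Typing.my_ind (motive := fun Γ a A => ∀ Δ₁ Δ₂ A₀ b, Γ = Δ₁ ++ A₀ :: Δ₂ →
      Typing P Δ₂ b A₀ → Wf P (substCtx b Δ₁ ++ Δ₂) →
      Typing P (substCtx b Δ₁ ++ Δ₂) (Expr.subst b Δ₁.length a) (Expr.subst b Δ₁.length A))
    ?_ ?_ ?_ ?_ ?_ ?_ h
  · intro Γ s₁ s₂ _ hax Δ₁ Δ₂ A₀ b _ hb hwf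
    simpa [Expr.subst] using Typing.sort hwf hax
  · intro Γ n A _ hl Δ₁ Δ₂ A₀ b heq hb hwf
    subst heq
    set m := Δ₁.length with hm
    rcases lt_trichotomy n m with hn | hn | hn
    · rw [Expr.subst_var_lt hn]
      have hl1 : Δ₁[n]? = some A := by
        rwa [List.getElem?_append_left hn] at hl
      have hl2 : (substCtx b Δ₁ ++ Δ₂)[n]? = some (Expr.subst b (m - n - 1) A) := by
        rw [List.getElem?_append_left (by rw [substCtx_length]; exact hn),
          substCtx_getElem? _ _ _ hn, hl1]
        rfl
      have := Typing.var hwf hl2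
      have heq2 : Expr.lift (n+1) 0 (Expr.subst b (m - n - 1) A)
          = Expr.subst b m (Expr.lift (n+1) 0 A) := by
        have := Expr.subst_lift A b 0 (m - n - 1) (n+1) (Nat.zero_le _)
        rw [show m - n - 1 + (n + 1) = m by omega] at this
        exact this.symm
      rwa [heq2] at this
    · rw [show n = m from hn, Expr.subst_var_eq]
      have hl1 : A = A₀ := by
        rw [show n = m from hn, List.getElem?_append_right (Nat.le_refl _), Nat.sub_self] at hl
        simpa using hl.symm
      subst hl1
      have heq2 : Expr.subst b m (Expr.lift (m+1) 0 A) = Expr.lift m 0 A :=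
        Expr.subst_lift_cancel A b 0 m m (Nat.zero_le _) (by omega)
      rw [heq2]
      have := weaken_many hb (substCtx b Δ₁)
      rw [substCtx_length] at this
      exact this hwf
    · rw [Expr.subst_var_gt hn]
      have hl1 : Δ₂[n - m - 1]? = some A := by
        rw [List.getElem?_append_right (by omega)] at hl
        rwa [show n - m = (n - m - 1) + 1 by omega, List.getElem?_cons_succ] at hl
      have hl2 : (substCtx b Δ₁ ++ Δ₂)[n - 1]? = some A := by
        rw [List.getElem?_append_right (by rw [substCtx_length]; omega), substCtx_length]
        rwa [show n - 1 - m = n - m - 1 by omega]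
      have := Typing.var hwf hl2
      have heq2 : Expr.subst b m (Expr.lift (n+1) 0 A) = Expr.lift n 0 A := by
        have := Expr.subst_lift_cancel A b 0 m n (Nat.zero_le _) (by omega)
        simpa using this
      rw [heq2, show n = n - 1 + 1 by omega]
      exact this
  · intro Γ A B s₁ s₂ s₃ h1 h2 hr ih1 ih2 Δ₁ Δ₂ A₀ b heq hb hwf
    subst heq
    have thA := ih1 Δ₁ Δ₂ A₀ b rfl hb hwf
    simp only [Expr.subst] at thA
    have hwf2 : Wf P ((Expr.subst b Δ₁.length A) :: (substCtx b Δ₁ ++ Δ₂)) := Wf.cons thA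
    have thB := ih2 (A :: Δ₁) Δ₂ A₀ b rfl hb (by simpa [substCtx] using hwf2)
    simp only [List.length_cons, substCtx] at thB
    simp only [Expr.subst]
    exact Typing.pi thA (by simpa [Expr.subst] using thB) hr
  · intro Γ A B b' s h1 h2 ih1 ih2 Δ₁ Δ₂ A₀ b heq hb hwf
    subst heq
    have thP := ih1 Δ₁ Δ₂ A₀ b rfl hb hwf
    simp only [Expr.subst] at thP
    obtain ⟨s₁, s₂, s₃, hA', hB', -, -⟩ := gen_pi thP
    have hwf2 : Wf P ((Expr.subst b Δ₁.length A) :: (substCtx b Δ₁ ++ Δ₂)) := Wf.cons hA'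
    have thb := ih2 (A :: Δ₁) Δ₂ A₀ b rfl hb (by simpa [substCtx] using hwf2)
    simp only [List.length_cons, substCtx] at thb
    simp only [Expr.subst]
    exact Typing.lam thP (by simpa using thb)
  · intro Γ f c A B h1 h2 ih1 ih2 Δ₁ Δ₂ A₀ b heq hb hwf
    subst heq
    have thf := ih1 Δ₁ Δ₂ A₀ b rfl hb hwf
    have thc := ih2 Δ₁ Δ₂ A₀ b rfl hb hwf
    simp only [Expr.subst] at thf
    have := Typing.app thf thc
    have heq2 : Expr.subst (Expr.subst b Δ₁.length c) 0 (Expr.subst b (Δ₁.length + 1) B)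
        = Expr.subst b Δ₁.length (Expr.subst c 0 B) := by
      have := Expr.subst_subst B c b 0 Δ₁.length
      simpa using this.symm
    rwa [heq2] at this
  · intro Γ a A B s _ _ hc ih1 ih2 Δ₁ Δ₂ A₀ b heq hb hwf
    subst heq
    have th1 := ih1 Δ₁ Δ₂ A₀ b rfl hb hwf
    have th2 := ih2 Δ₁ Δ₂ A₀ b rfl hb hwf
    simp only [Expr.subst] at th2
    exact Typing.conv th1 th2 (hc.subst_right b Δ₁.length)

theorem subst_typing {P : PTSSpec} {Γ : Ctx} {A₀ b B c : Expr}
    (hB : Typing P (A₀ :: Γ) B c) (hb : Typing P Γ b A₀) :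
    Typing P Γ (Expr.subst b 0 B) (Expr.subst b 0 c) :=
  subst_gen hB [] Γ A₀ b rfl hb (typing_wf hb)

/-! ### CC-specific facts -/

theorem cc_ax {s₁ s₂ : Nat} (h : (s₁, s₂) ∈ CC.ax) : s₁ = 0 ∧ s₂ = 1 := by
  simp only [CC, Set.mem_singleton_iff, Prod.mk.injEq] at h
  exact h

theorem cc_rules {s₁ s₂ s₃ : Nat} (h : (s₁, s₂, s₃) ∈ CC.rules) : s₃ = s₂ ∧ (s₂ = 0 ∨ s₂ = 1) := by
  simp only [CC, Set.mem_insert_iff, Set.mem_singleton_iff, Prod.mk.injEq] at h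
  rcases h with ⟨-, h1, h2⟩ | ⟨-, h1, h2⟩ | ⟨-, h1, h2⟩ | ⟨-, h1, h2⟩ <;> omega

theorem sort1_no_type {Γ : Ctx} {C : Expr} (h : Typing CC Γ (.sort 1) C) : False := by
  obtain ⟨s₂, hax, -⟩ := gen_sort h
  exact absurd (cc_ax hax).1 (by omega)

/-- Uniqueness of types for CC. -/
theorem unique {Γ a A} (h : Typing CC Γ a A) : ∀ A', Typing CC Γ a A' → Conv A A' := by
  refine Typing.my_ind (motive := fun Γ a A => ∀ A', Typing CC Γ a A' → Conv A A')
    ?_ ?_ ?_ ?_ ?_ ?_ h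
  · intro Γ s₁ s₂ _ hax A' h'
    obtain ⟨s₂', hax', hc'⟩ := gen_sort h'
    obtain ⟨-, h2⟩ := cc_ax hax
    obtain ⟨-, h2'⟩ := cc_ax hax'
    subst h2; subst h2'
    exact hc'.symm
  · intro Γ n A _ hl A' h'
    obtain ⟨A2, hl2, hc'⟩ := gen_var h'
    rw [hl] at hl2
    cases hl2
    exact hc'.symm
  · intro Γ A B s₁ s₂ s₃ h1 h2 hr ih1 ih2 A' h'
    obtain ⟨s₁', s₂', s₃', h1', h2', hr', hc'⟩ := gen_pi h'
    have e2 : s₂ = s₂' := conv_sort_sort (ih2 _ h2')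
    obtain ⟨e3, -⟩ := cc_rules hr
    obtain ⟨e3', -⟩ := cc_rules hr'
    have : s₃ = s₃' := by omega
    subst this
    exact hc'.symm
  · intro Γ A B b s h1 h2 ih1 ih2 A' h'
    obtain ⟨B', s', h1', h2', hc'⟩ := gen_lam h'
    have : Conv B B' := ih2 _ h2'
    exact (Conv.pi2 this).trans hc'.symm
  · intro Γ f b A B h1 h2 ih1 ih2 A' h'
    obtain ⟨A2, B2, h1', h2', hc'⟩ := gen_app h'
    have hpi : Conv (.pi A B) (.pi A2 B2) := ih1 _ h1'
    have hB : Conv B B2 := (conv_pi_inv hpi).2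
    exact (hB.subst_right b 0).trans hc'.symm
  · intro Γ a A B s _ _ hc ih1 ih2 A' h'
    exact hc.symm.trans (ih1 _ h')

/-- Type correctness for CC. -/
theorem type_correct {Γ a A} (h : Typing CC Γ a A) :
    A = .sort 1 ∨ ∃ s, Typing CC Γ A (.sort s) := by
  refine Typing.my_ind (motive := fun Γ a A => A = .sort 1 ∨ ∃ s, Typing CC Γ A (.sort s))
    ?_ ?_ ?_ ?_ ?_ ?_ h
  · intro Γ s₁ s₂ _ hax
    left
    rw [(cc_ax hax).2]
  · intro Γ n A hwf hl
    right
    exact wf_lookup hwf hl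
  · intro Γ A B s₁ s₂ s₃ h1 h2 hr _ _
    obtain ⟨e3, hs2⟩ := cc_rules hr
    rcases eq_or_ne s₃ 1 with h3 | h3
    · left; rw [h3]
    · right
      have hmem : ((s₃ : Nat), (1 : Nat)) ∈ CC.ax := by
        have : s₃ = 0 := by omega
        simp [CC, this]
      exact ⟨1, Typing.sort (typing_wf h1) hmem⟩
  · intro Γ A B b s h1 _ _ _
    right
    exact ⟨s, h1⟩
  · intro Γ f b A B h1 h2 ih1 _
    right
    rcases ih1 with h | ⟨s, hs⟩
    · cases h
    · obtain ⟨s₁, s₂, s₃, hA, hB, -, -⟩ := gen_pi hs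
      exact ⟨s₂, by simpa [Expr.subst] using subst_typing hB h2⟩
  · intro Γ a A B s _ hB _ _ _
    right
    exact ⟨s, hB⟩

/-- Classification for CC: if `Γ ⊢ A : B`, then exactly one of the following
holds: `B = □`, or `Γ ⊢ B : □`, or `Γ ⊢ B : ∗`. -/
theorem classification {Γ : Ctx} {A B : Expr} (h : Typing CC Γ A B) :
    (B = Expr.sort 1 ∧ ¬ Typing CC Γ B (Expr.sort 1) ∧ ¬ Typing CC Γ B (Expr.sort 0)) ∨
    (B ≠ Expr.sort 1 ∧ Typing CC Γ B (Expr.sort 1) ∧ ¬ Typing CC Γ B (Expr.sort 0)) ∨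
    (B ≠ Expr.sort 1 ∧ ¬ Typing CC Γ B (Expr.sort 1) ∧ Typing CC Γ B (Expr.sort 0)) := by
  rcases type_correct h with hB1 | ⟨s, hs⟩
  · subst hB1
    exact Or.inl ⟨rfl, fun h1 => sort1_no_type h1, fun h0 => sort1_no_type h0⟩
  · have hne : B ≠ Expr.sort 1 := fun e => sort1_no_type (e ▸ hs)
    have hs01 : s = 0 ∨ s = 1 := by
      rcases type_correct hs with h1 | ⟨s', hs'⟩
      · right; injection h1
      · left; obtain ⟨s₂, hax, -⟩ := gen_sort hs'; exact (cc_ax hax).1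
    rcases hs01 with rfl | rfl
    · refine Or.inr (Or.inr ⟨hne, fun h1 => ?_, hs⟩)
      exact absurd (conv_sort_sort (unique hs _ h1)) (by omega)
    · refine Or.inr (Or.inl ⟨hne, hs, fun h0 => ?_⟩)
      exact absurd (conv_sort_sort (unique hs _ h0)) (by omega)
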